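/- Let L be a finite nonempty set of linear functionals on ℝⁿ with ℓ ∈ L ↔ -ℓ ∈ L such that B := {x | ℓ(x) ≤ 1 for all ℓ ∈ L} is bounded, and let h(x) := max_{ℓ ∈ L} ℓ(x) be the associated polyhedral norm. Let f ∈ ℝ[x₁,…,xₙ], X := {x ∈ ℝⁿ | f(x) = 0}, and assume ∇f(x) ≠ 0 for every x ∈ X (X is a smooth hypersurface). Suppose u ∈ ℝⁿ lies in the medial axis of X, i.e. there exist distinct points x, y ∈ X with h(u - x) = h(u - y) ≤ h(u - z) for all z ∈ X. Then, with λ := h(u - x) (which is > 0), there exist nonempty subsets A, A' ⊆ L such that: ℓ(u - x) = λ for all ℓ ∈ A and ℓ(u - x) ≤ λ for all ℓ ∈ L; ℓ'(u - y) = λ for all ℓ' ∈ A' and ℓ'(u - y) ≤ λ for all ℓ' ∈ L; ∇f(x) lies in the span of the vectors representing the functionals in A; and ∇f(y) lies in the span of the vectors representing the functionals in A'. In particular, (x, y, u, λ) satisfies the polynomial equidistance and tangency equations defining one of the incidence varieties V_{(F₁,F₂)}, so u lies in the equidistant locus V(I_Eq); hence the medial axis Med_h(X), and therefore its algebraic closure,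 is contained in the equidistant locus. -/

import Mathlib

/-- The gradient of a multivariate polynomial `f` at a point `v`: the vector of
partial derivatives `pderiv i f` evaluated at `v`. -/
noncomputable def grad {n : ℕ} (f : MvPolynomial (Fin n) ℝ)
    (v : EuclideanSpace ℝ (Fin n)) : EuclideanSpace ℝ (Fin n) :=
  WithLp.toLp 2 fun i => MvPolynomial.eval (fun j => v j) (MvPolynomial.pderiv i f)

/-- The vector in `ℝⁿ` representing a linear functional `ℓ` (via the standard
inner product). -/
noncomputable def vecOf {n : ℕ} (ℓ : EuclideanSpace ℝ (Fin n) →ₗ[ℝ] ℝ) :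
    EuclideanSpace ℝ (Fin n) :=
  WithLp.toLp 2 fun i => ℓ (EuclideanSpace.single i 1)

open MvPolynomial Filter

noncomputable def gradCLM {n : ℕ} (f : MvPolynomial (Fin n) ℝ)
    (v : EuclideanSpace ℝ (Fin n)) : EuclideanSpace ℝ (Fin n) →L[ℝ] ℝ :=
  ∑ i, MvPolynomial.eval (fun j => v j) (MvPolynomial.pderiv i f) • EuclideanSpace.proj i

lemma gradCLM_apply {n : ℕ} (f : MvPolynomial (Fin n) ℝ)
    (v w : EuclideanSpace ℝ (Fin n)) :
    gradCLM f v w = ∑ i, MvPolynomial.eval (fun j => v j) (MvPolynomial.pderiv i f) * w i := by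
  simp [gradCLM]

lemma gradCLM_eq_inner {n : ℕ} (f : MvPolynomial (Fin n) ℝ)
    (v w : EuclideanSpace ℝ (Fin n)) :
    gradCLM f v w = inner ℝ (grad f v) w := by
  simp [gradCLM_apply, PiLp.inner_apply, grad, RCLike.inner_apply, conj_trivial]
  exact Finset.sum_congr rfl fun _ _ => mul_comm _ _

lemma hasStrictFDerivAt_eval {n : ℕ} (f : MvPolynomial (Fin n) ℝ)
    (v : EuclideanSpace ℝ (Fin n)) :
    HasStrictFDerivAt (fun w : EuclideanSpace ℝ (Fin n) => MvPolynomial.eval (fun j => w j) f)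
      (gradCLM f v) v := by
  induction f using MvPolynomial.induction_on with
  | C a =>
      have h0 : gradCLM (C a : MvPolynomial (Fin n) ℝ) v = 0 := by
        ext w; simp [gradCLM]
      rw [h0]
      simpa using hasStrictFDerivAt_const (a) v
  | add p q hp hq =>
      have h0 : gradCLM (p + q) v = gradCLM p v + gradCLM q v := by
        ext w; simp [gradCLM_apply, add_mul, Finset.sum_add_distrib]
      rw [h0]
      exact (hp.add hq).congr_of_eventuallyEq (Eventually.of_forall fun w => by simp)
  | mul_X p i hp =>
      have hXi : HasStrictFDerivAt (fun w : EuclideanSpace ℝ (Fin n) => w i)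
          ((EuclideanSpace.proj i : EuclideanSpace ℝ (Fin n) →L[ℝ] ℝ)) v :=
        ((EuclideanSpace.proj i : EuclideanSpace ℝ (Fin n) →L[ℝ] ℝ)).hasStrictFDerivAt
      have hmul := hp.mul hXi
      have heq : gradCLM (p * X i) v
          = MvPolynomial.eval (fun j => v j) p • (EuclideanSpace.proj i : EuclideanSpace ℝ (Fin n) →L[ℝ] ℝ)
            + v i • gradCLM p v := by
        ext w
        simp only [gradCLM_apply, ContinuousLinearMap.add_apply, ContinuousLinearMap.smul_apply,
          smul_eq_mul]
        simp only [pderiv_mul, pderiv_X, map_add, map_mul, add_mul]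
        rw [Finset.sum_add_distrib, add_comm]
        congr 1
        · simp only [eval_X, Pi.single_apply, apply_ite, map_one, map_zero]
          simp [mul_ite, Finset.sum_ite_eq', eq_comm, PiLp.proj_apply, mul_comm]
        · rw [Finset.mul_sum]
          refine Finset.sum_congr rfl fun j _ => by simp [eval_X]; ring
      rw [heq]
      exact hmul.congr_of_eventuallyEq (Eventually.of_forall fun w => by simp)

lemma apply_eq_inner {n : ℕ} (ℓ : EuclideanSpace ℝ (Fin n) →ₗ[ℝ] ℝ)
    (v : EuclideanSpace ℝ (Fin n)) : ℓ v = inner ℝ (vecOf ℓ) v := by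
  have hv : v = ∑ i, v i • EuclideanSpace.single i (1 : ℝ) := by
    ext j
    rw [WithLp.ofLp_sum, Finset.sum_apply]
    simp [EuclideanSpace.single_apply, Finset.sum_ite_eq']
  conv_lhs => rw [hv]
  rw [map_sum, PiLp.inner_apply]
  refine Finset.sum_congr rfl fun i _ => by
    simp [vecOf, RCLike.inner_apply, conj_trivial, mul_comm]

lemma eventually_lt_self_of_hasDerivAt_neg {φ : ℝ → ℝ} {c : ℝ}
    (hφ : HasDerivAt φ c 0) (hc : c < 0) :
    ∀ᶠ t in nhdsWithin (0:ℝ) (Set.Ioi 0), φ t < φ 0 := by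
  have hs := hasDerivAt_iff_tendsto_slope.mp hφ
  have hev : ∀ᶠ t in nhdsWithin (0:ℝ) {(0:ℝ)}ᶜ, slope φ 0 t < 0 :=
    hs.eventually_lt_const hc
  have hmono : nhdsWithin (0:ℝ) (Set.Ioi 0) ≤ nhdsWithin (0:ℝ) {(0:ℝ)}ᶜ :=
    nhdsWithin_mono _ (fun t ht => ne_of_gt ht)
  filter_upwards [hev.filter_mono hmono, self_mem_nhdsWithin] with t hslope (ht : t ∈ Set.Ioi 0)
  have ht0 : (0:ℝ) < t := ht
  rw [slope_def_field] at hslope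
  have : (φ t - φ 0) / t < 0 := by simpa using hslope
  rcases div_neg_iff.mp this with ⟨h1, _⟩ | ⟨_, h2⟩
  · linarith
  · linarith

/-- Core lemma: at a closest point `p` of `X` to `u`, with the active set `A`,
the gradient lies in the span of the active vectors. -/
lemma core {n : ℕ}
    (L : Finset (EuclideanSpace ℝ (Fin n) →ₗ[ℝ] ℝ)) (hL : L.Nonempty)
    (h : EuclideanSpace ℝ (Fin n) → ℝ)
    (hh : ∀ x, h x = L.sup' hL fun ℓ => ℓ x)
    (f : MvPolynomial (Fin n) ℝ)
    (X : Set (EuclideanSpace ℝ (Fin n)))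
    (hX : X = {x | MvPolynomial.eval (fun j => x j) f = 0})
    (u p : EuclideanSpace ℝ (Fin n)) (hp : p ∈ X) (hg : grad f p ≠ 0)
    (hlam : 0 < h (u - p)) (hmin : ∀ z ∈ X, h (u - p) ≤ h (u - z)) :
    ∃ A : Finset (EuclideanSpace ℝ (Fin n) →ₗ[ℝ] ℝ),
      A ⊆ L ∧ A.Nonempty ∧
      (∀ ℓ ∈ A, ℓ (u - p) = h (u - p)) ∧
      (∀ ℓ ∈ L, ℓ (u - p) ≤ h (u - p)) ∧
      grad f p ∈ Submodule.span ℝ (vecOf '' (A : Set (EuclideanSpace ℝ (Fin n) →ₗ[ℝ] ℝ))) := by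
  classical
  set lam := h (u - p) with hlamdef
  set A : Finset (EuclideanSpace ℝ (Fin n) →ₗ[ℝ] ℝ) :=
    L.filter (fun ℓ => ℓ (u - p) = lam) with hA
  have hAsub : A ⊆ L := Finset.filter_subset _ _
  have hle : ∀ ℓ ∈ L, ℓ (u - p) ≤ lam := by
    intro ℓ hℓ; rw [hlamdef, hh]; exact Finset.le_sup' (fun ℓ : EuclideanSpace ℝ (Fin n) →ₗ[ℝ] ℝ => ℓ (u - p)) hℓ
  have hAne : A.Nonempty := by
    obtain ⟨ℓ₀, hℓ₀, hmax⟩ := L.exists_mem_eq_sup' hL (fun ℓ : EuclideanSpace ℝ (Fin n) →ₗ[ℝ] ℝ => ℓ (u - p))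
    exact ⟨ℓ₀, Finset.mem_filter.2 ⟨hℓ₀, by rw [hlamdef, hh]; exact hmax.symm⟩⟩
  have hAeq : ∀ ℓ ∈ A, ℓ (u - p) = lam := fun ℓ hℓ => (Finset.mem_filter.1 hℓ).2
  refine ⟨A, hAsub, hAne, hAeq, hle, ?_⟩
  by_contra hns
  set K := Submodule.span ℝ (vecOf '' (A : Set (EuclideanSpace ℝ (Fin n) →ₗ[ℝ] ℝ))) with hK
  set g := grad f p with hgdef
  -- orthogonal direction
  set w : EuclideanSpace ℝ (Fin n) := g - (K.orthogonalProjectionOnto g : EuclideanSpace ℝ (Fin n)) with hw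
  have hproj : ((K.orthogonalProjectionOnto g : K) : EuclideanSpace ℝ (Fin n)) ∈ K :=
    (K.orthogonalProjectionOnto g).2
  have hwK : w ∈ Kᗮ := by exact K.sub_starProjection_mem_orthogonal g
  have hw0 : w ≠ 0 := by
    intro h0
    apply hns
    have hgeq : g = ((K.orthogonalProjectionOnto g : K) : EuclideanSpace ℝ (Fin n)) := by
      rw [hw, sub_eq_zero] at h0; exact h0
    rw [hgdef] at hgeq ⊢
    rw [hgeq]; exact hproj
  have hgw : (inner ℝ g w : ℝ) = ‖w‖^2 := by
    have hsplit : g = ((K.orthogonalProjectionOnto g : K) : EuclideanSpace ℝ (Fin n)) + w := by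
      rw [hw]; abel
    nth_rewrite 1 [hsplit]
    rw [inner_add_left]
    have h1 : (inner ℝ ((K.orthogonalProjectionOnto g : K) : EuclideanSpace ℝ (Fin n)) w : ℝ) = 0 :=
      (Submodule.mem_orthogonal K w).mp hwK _ hproj
    rw [h1, real_inner_self_eq_norm_sq]; ring
  have hgw0 : (0:ℝ) < inner ℝ g w := by
    rw [hgw]; exact pow_pos (norm_pos_iff.2 hw0) 2
  have hwA : ∀ ℓ ∈ A, ℓ w = 0 := fun ℓ hℓ => by
    rw [apply_eq_inner]
    exact (Submodule.mem_orthogonal K w).mp hwK _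
      (Submodule.subset_span ⟨ℓ, by exact_mod_cast hℓ, rfl⟩)
  set q : EuclideanSpace ℝ (Fin n) := u - p with hq
  set c : ℝ := (inner ℝ g q) / (inner ℝ g w) with hc
  set d : EuclideanSpace ℝ (Fin n) := q - c • w with hd
  have hdg : (inner ℝ g d : ℝ) = 0 := by
    rw [hd, inner_sub_right, real_inner_smul_right, hc,
      div_mul_cancel₀ _ (ne_of_gt hgw0), sub_self]
  have hdA : ∀ ℓ ∈ A, ℓ d = lam := fun ℓ hℓ => by
    rw [hd, map_sub, map_smul, hwA ℓ hℓ, smul_eq_mul, mul_zero, sub_zero]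
    exact hAeq ℓ hℓ
  -- the polynomial map and its derivative
  set F : EuclideanSpace ℝ (Fin n) → ℝ := fun w => MvPolynomial.eval (fun j => w j) f with hFdef
  have hFp : F p = 0 := by rw [hX] at hp; exact hp
  have hder : HasStrictFDerivAt F (gradCLM f p) p := hasStrictFDerivAt_eval f p
  set D := gradCLM f p with hD
  have hsurj : D.range = ⊤ := by
    rw [LinearMap.range_eq_top]
    intro r
    obtain ⟨i, hi⟩ : ∃ i, g i ≠ 0 := by
      by_contra hcon; push_neg at hcon
      exact hg (by rw [hgdef] at hcon; exact PiLp.ext hcon)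
    have hDe : D (EuclideanSpace.single i 1) = g i := by
      rw [hD, gradCLM_eq_inner, PiLp.inner_apply]
      simp [EuclideanSpace.single_apply, RCLike.inner_apply, conj_trivial,
        Finset.sum_ite_eq', hgdef]
    refine ⟨(r / g i) • EuclideanSpace.single i 1, ?_⟩
    rw [map_smul, ContinuousLinearMap.coe_coe, hDe, smul_eq_mul]
    field_simp
  have hDd : D d = 0 := by rw [hD, gradCLM_eq_inner]; exact hdg
  set dk : D.ker := ⟨d, LinearMap.mem_ker.2 hDd⟩ with hdk
  set φ := hder.implicitFunction F D hsurj with hφ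
  set z : ℝ → EuclideanSpace ℝ (Fin n) := fun t => φ 0 (t • dk) with hz
  have hz0 : z 0 = p := by
    have h1 : φ (F p) 0 = p := hder.implicitFunction_apply_image hsurj
    rw [hFp] at h1
    simpa [hz] using h1
  have hzX : ∀ᶠ t in nhds (0:ℝ), F (z t) = 0 := by
    have hmap := hder.map_implicitFunction_eq (f := F) (f' := D) hsurj
    rw [hFp] at hmap
    have hcont : Filter.Tendsto (fun t : ℝ => ((0:ℝ), t • dk)) (nhds 0)
        (nhds ((0:ℝ), (0 : D.ker))) := by
      have hc2 : Continuous (fun t : ℝ => (((0:ℝ), t • dk) : ℝ × D.ker)) :=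
        continuous_const.prodMk (continuous_id.smul continuous_const)
      exact hc2.tendsto' 0 _ (by simp)
    exact hcont.eventually hmap
  have hzderiv : HasDerivAt z d 0 := by
    have himp := hder.to_implicitFunction (f := F) (f' := D) hsurj
    rw [hFp] at himp
    have hsmd : HasStrictFDerivAt (fun t : ℝ => t • dk)
        ((1 : ℝ →L[ℝ] ℝ).smulRight dk) 0 := by
      have := ((1 : ℝ →L[ℝ] ℝ).smulRight dk).hasStrictFDerivAt (x := (0:ℝ))
      refine this.congr_of_eventuallyEq (Filter.Eventually.of_forall fun t => ?_)
      simp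
    have h0 : ((0:ℝ) • dk) = (0 : D.ker) := zero_smul _ _
    rw [← h0] at himp
    have hcomp := himp.comp (0:ℝ) hsmd
    have := hcomp.hasFDerivAt.hasDerivAt
    simpa [hz] using this
  have hcurve : ∀ ℓ : EuclideanSpace ℝ (Fin n) →ₗ[ℝ] ℝ,
      HasDerivAt (fun t => ℓ (u - z t)) (-(ℓ d)) 0 := by
    intro ℓ
    have hu : HasDerivAt (fun t => u - z t) (-d) 0 := hzderiv.const_sub u
    have hℓc := (LinearMap.toContinuousLinearMap ℓ).hasFDerivAt (x := u - z 0)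
    have hcmp := (hℓc.comp (0:ℝ) hu.hasFDerivAt).hasDerivAt
    have heqfun : (⇑(LinearMap.toContinuousLinearMap ℓ) ∘ fun t => u - z t)
        = fun t => ℓ (u - z t) := rfl
    rw [heqfun] at hcmp
    convert hcmp using 1
    · rfl
    · rfl
    simp
  have hall : ∀ᶠ t in nhdsWithin (0:ℝ) (Set.Ioi 0), ∀ ℓ ∈ L, ℓ (u - z t) < lam := by
    rw [Filter.eventually_all_finset]
    intro ℓ hℓ
    by_cases hmem : ℓ ∈ A
    · have hder0 := hcurve ℓ
      rw [hdA ℓ hmem] at hder0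
      have hneg : -lam < 0 := neg_lt_zero.2 hlam
      have hev := eventually_lt_self_of_hasDerivAt_neg hder0 hneg
      have hval : ℓ (u - z 0) = lam := by rw [hz0]; exact hAeq ℓ hmem
      filter_upwards [hev] with t ht
      rw [hval] at ht; exact ht
    · have hlt : ℓ (u - p) < lam :=
        lt_of_le_of_ne (hle ℓ hℓ) (fun hcon => hmem (Finset.mem_filter.2 ⟨hℓ, hcon⟩))
      have hval : ℓ (u - z 0) < lam := by rw [hz0]; exact hlt
      have hcont : Filter.Tendsto (fun t => ℓ (u - z t)) (nhds 0) (nhds (ℓ (u - z 0))) :=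
        (hcurve ℓ).continuousAt
      exact (hcont.eventually_lt_const hval).filter_mono nhdsWithin_le_nhds
  have hfin := ((hzX.filter_mono nhdsWithin_le_nhds).and hall).exists
  obtain ⟨t, hFz, hℓz⟩ := hfin
  have hzXmem : z t ∈ X := by rw [hX]; exact hFz
  have h1 : lam ≤ h (u - z t) := hmin _ hzXmem
  have h2 : h (u - z t) < lam := by
    rw [hh]
    exact (Finset.sup'_lt_iff hL).mpr hℓz
  linarith


lemma eq_zero_of_forall_apply_eq_zero {n : ℕ}
    (L : Finset (EuclideanSpace ℝ (Fin n) →ₗ[ℝ] ℝ))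
    (hbdd : Bornology.IsBounded {x : EuclideanSpace ℝ (Fin n) | ∀ ℓ ∈ L, ℓ x ≤ 1})
    (v : EuclideanSpace ℝ (Fin n)) (hv : ∀ ℓ ∈ L, ℓ v = 0) : v = 0 := by
  obtain ⟨C, hC⟩ := isBounded_iff_forall_norm_le.mp hbdd
  have hmem : ∀ t : ℝ, t • v ∈ {x : EuclideanSpace ℝ (Fin n) | ∀ ℓ ∈ L, ℓ x ≤ 1} := by
    intro t ℓ hℓ
    rw [map_smul, hv ℓ hℓ, smul_eq_mul, mul_zero]
    norm_num
  by_contra hv0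
  have hnorm : 0 < ‖v‖ := norm_pos_iff.2 hv0
  have hC0 : (0:ℝ) ≤ C := le_trans (by simp) (hC _ (hmem 0))
  have := hC _ (hmem ((C + 1) / ‖v‖))
  rw [norm_smul] at this
  have habs : ‖(C + 1) / ‖v‖‖ = (C + 1) / ‖v‖ := by
    rw [Real.norm_eq_abs, abs_of_nonneg (by positivity)]
  rw [habs, div_mul_cancel₀ _ (ne_of_gt hnorm)] at this
  linarith

/-- If `u` lies in the medial axis of the smooth hypersurface
`X = V(f)`, witnessed by distinct closest points `x, y ∈ X`, then with
`λ = h(u - x) > 0` there are nonempty sets `A, A' ⊆ L` of active functionals at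
`x` resp. `y` realizing the distance, and the gradients `∇f(x)`, `∇f(y)` lie in
the spans of the vectors representing `A` resp. `A'`; thus `(x, y, u, λ)`
satisfies the equidistance and tangency equations of an incidence variety and
`u` lies in the equidistant locus. -/
theorem stmt_9 {n : ℕ} (hn : 1 ≤ n)
    (L : Finset (EuclideanSpace ℝ (Fin n) →ₗ[ℝ] ℝ)) (hL : L.Nonempty)
    (hsymm : ∀ ℓ, ℓ ∈ L ↔ -ℓ ∈ L)
    (hbdd : Bornology.IsBounded {x : EuclideanSpace ℝ (Fin n) | ∀ ℓ ∈ L, ℓ x ≤ 1})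
    (h : EuclideanSpace ℝ (Fin n) → ℝ)
    (hh : ∀ x, h x = L.sup' hL fun ℓ => ℓ x)
    (f : MvPolynomial (Fin n) ℝ)
    (X : Set (EuclideanSpace ℝ (Fin n)))
    (hX : X = {x | MvPolynomial.eval (fun j => x j) f = 0})
    (hsm : ∀ x ∈ X, grad f x ≠ 0)
    (u x y : EuclideanSpace ℝ (Fin n))
    (hx : x ∈ X) (hy : y ∈ X) (hxy : x ≠ y)
    (heq : h (u - x) = h (u - y))
    (hmin : ∀ z ∈ X, h (u - x) ≤ h (u - z)) :
    0 < h (u - x) ∧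
    ∃ A A' : Finset (EuclideanSpace ℝ (Fin n) →ₗ[ℝ] ℝ),
      A ⊆ L ∧ A' ⊆ L ∧ A.Nonempty ∧ A'.Nonempty ∧
      (∀ ℓ ∈ A, ℓ (u - x) = h (u - x)) ∧
      (∀ ℓ ∈ L, ℓ (u - x) ≤ h (u - x)) ∧
      (∀ ℓ ∈ A', ℓ (u - y) = h (u - x)) ∧
      (∀ ℓ ∈ L, ℓ (u - y) ≤ h (u - x)) ∧
      grad f x ∈ Submodule.span ℝ (vecOf '' (A : Set (EuclideanSpace ℝ (Fin n) →ₗ[ℝ] ℝ))) ∧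
      grad f y ∈ Submodule.span ℝ (vecOf '' (A' : Set (EuclideanSpace ℝ (Fin n) →ₗ[ℝ] ℝ))) := by
  have key : ∀ v : EuclideanSpace ℝ (Fin n), h v ≤ 0 → v = 0 := by
    intro v hv
    refine eq_zero_of_forall_apply_eq_zero L hbdd v ?_
    intro ℓ hℓ
    have h1 : ℓ v ≤ 0 := le_trans (by rw [hh] at hv; exact le_trans (Finset.le_sup'
      (fun ℓ : EuclideanSpace ℝ (Fin n) →ₗ[ℝ] ℝ => ℓ v) hℓ) hv) le_rfl
    have hℓ' : -ℓ ∈ L := (hsymm ℓ).mp hℓ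
    have h2 : (-ℓ) v ≤ 0 := by
      rw [hh] at hv
      exact le_trans (Finset.le_sup'
        (fun ℓ : EuclideanSpace ℝ (Fin n) →ₗ[ℝ] ℝ => ℓ v) hℓ') hv
    rw [LinearMap.neg_apply] at h2
    linarith
  have hpos : 0 < h (u - x) := by
    by_contra hnp
    push_neg at hnp
    have h1 : u - x = 0 := key _ hnp
    have h2 : u - y = 0 := key _ (heq ▸ hnp)
    apply hxy
    have : x = u := by rw [sub_eq_zero] at h1; exact h1.symm
    rw [sub_eq_zero] at h2
    rw [this, ← h2]
  have hposy : 0 < h (u - y) := heq ▸ hpos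
  have hminy : ∀ z ∈ X, h (u - y) ≤ h (u - z) := fun z hz => heq ▸ hmin z hz
  obtain ⟨A, hA1, hA2, hA3, hA4, hA5⟩ :=
    core L hL h hh f X hX u x hx (hsm x hx) hpos hmin
  obtain ⟨A', hB1, hB2, hB3, hB4, hB5⟩ :=
    core L hL h hh f X hX u y hy (hsm y hy) hposy hminy
  exact ⟨hpos, A, A', hA1, hB1, hA2, hB2, hA3, hA4,
    fun ℓ hℓ => heq ▸ hB3 ℓ hℓ, fun ℓ hℓ => heq ▸ hB4 ℓ hℓ, hA5, hB5⟩
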